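/- In the inductive construction for the upper bound, the limit measure satisfies: for every i and every x ∈ K_i, e^{−m_i(x)s} ≤ μ̃(B̄(x,γ_i)) ≤ C e^{−m_i(x)s}, where C = Π_{n=1}^∞ (1 + 2^{−n}) < ∞; in particular 1 < μ̃(K̃) ≤ 2C. -/

import Mathlib

open Set Filter Topology MeasureTheory ENNReal NNReal

variable {X : Type*}

def IsFlow [TopologicalSpace X] (φ : ℝ → X → X) : Prop :=
  Continuous (fun p : X × ℝ => φ p.2 p.1) ∧ (∀ x, φ 0 x = x) ∧
    ∀ s t : ℝ, ∀ x : X, φ (s + t) x = φ s (φ t x)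

def FixedPointFree (φ : ℝ → X → X) : Prop := ∀ x : X, ∃ t : ℝ, φ t x ≠ x

/-- A reparametrization on an interval `I` containing `0`: a continuous injective map
(hence a homeomorphism onto its image) with `α 0 = 0`. -/
def IsRepOn (I : Set ℝ) (α : ℝ → ℝ) : Prop :=
  ContinuousOn α I ∧ Set.InjOn α I ∧ α 0 = 0

def IsRep (t : ℝ) (α : ℝ → ℝ) : Prop := IsRepOn (Set.Icc 0 t) α

/-- Open reparametrization ball `B(x,t,ε,φ)`. -/
def repBall [MetricSpace X] (φ : ℝ → X → X) (x : X) (t ε : ℝ) : Set X :=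
  {y | ∃ α : ℝ → ℝ, IsRep t α ∧ ∀ s ∈ Set.Icc 0 t, dist (φ (α s) x) (φ s y) < ε}

/-- Closed reparametrization ball `B̄(x,t,ε,φ)`. -/
def repBallCl [MetricSpace X] (φ : ℝ → X → X) (x : X) (t ε : ℝ) : Set X :=
  {y | ∃ α : ℝ → ℝ, IsRep t α ∧ ∀ s ∈ Set.Icc 0 t, dist (φ (α s) x) (φ s y) ≤ ε}

/-- A (finite or countable) packing family: pairwise disjoint closed reparametrization balls
with centers in `Z` and times at least `N`. -/
def IsPackingFamily [MetricSpace X] (φ : ℝ → X → X) (Z : Set X) (ε : ℝ) (N : ℕ)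
    (I : Set ℕ) (x : ℕ → X) (t : ℕ → ℝ) : Prop :=
  (∀ i ∈ I, x i ∈ Z ∧ (N : ℝ) ≤ t i) ∧
    ∀ i ∈ I, ∀ j ∈ I, i ≠ j →
      Disjoint (repBallCl φ (x i) (t i) ε) (repBallCl φ (x j) (t j) ε)

/-- `P^s_{N,ε}(φ,Z)`. -/
noncomputable def packPre [MetricSpace X] (φ : ℝ → X → X) (Z : Set X) (s ε : ℝ) (N : ℕ) :
    ℝ≥0∞ :=
  ⨆ (x : ℕ → X) (t : ℕ → ℝ) (I : Set ℕ) (_ : IsPackingFamily φ Z ε N I x t),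
    ∑' i : I, ENNReal.ofReal (Real.exp (-(s * t i)))

/-- `P^s_ε(φ,Z) = lim_{N→∞} P^s_{N,ε}(φ,Z)` (the limit of a non-increasing sequence). -/
noncomputable def packP [MetricSpace X] (φ : ℝ → X → X) (Z : Set X) (s ε : ℝ) : ℝ≥0∞ :=
  ⨅ N : ℕ, packPre φ Z s ε N

/-- `𝒫^s_ε(Z)`. -/
noncomputable def packM [MetricSpace X] (φ : ℝ → X → X) (Z : Set X) (s ε : ℝ) : ℝ≥0∞ :=
  ⨅ (Zs : ℕ → Set X) (_ : Z ⊆ ⋃ i, Zs i), ∑' i, packP φ (Zs i) s ε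

/-- `h^P_top(φ,Z,ε) = inf{s ≥ 0 : 𝒫^s_ε(Z) = 0}`. -/
noncomputable def packEnt [MetricSpace X] (φ : ℝ → X → X) (Z : Set X) (ε : ℝ) : ℝ≥0∞ :=
  sInf (ENNReal.ofReal '' {s : ℝ | 0 ≤ s ∧ packM φ Z s ε = 0})

/-- `h^P_top(φ,Z) = lim_{ε→0} h^P_top(φ,Z,ε)` (the limit is the supremum by monotonicity). -/
noncomputable def packEntTop [MetricSpace X] (φ : ℝ → X → X) (Z : Set X) : ℝ≥0∞ :=
  ⨆ (ε : ℝ) (_ : 0 < ε), packEnt φ Z ε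

/-- The canonical map `EReal → ℝ≥0∞` (sending negatives to `0` and `⊤` to `⊤`). -/
noncomputable def erealToENNReal (x : EReal) : ℝ≥0∞ :=
  if x = ⊤ then ⊤ else ENNReal.ofReal x.toReal

/-- `limsup_{t→∞} −(1/t) log μ(B(x,t,ε,φ))`, as an extended nonnegative real. -/
noncomputable def upLocalEntAt [MetricSpace X] [MeasurableSpace X] (φ : ℝ → X → X) (μ : Measure X) (x : X)
    (ε : ℝ) : ℝ≥0∞ :=
  erealToENNReal (Filter.limsup
    (fun t : ℝ => ((t⁻¹ : ℝ) : EReal) * (-(ENNReal.log (μ (repBall φ x t ε)))))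
    Filter.atTop)

/-- The upper local entropy `h̄_μ(φ,x)`; the limit as `ε → 0` is the supremum over `ε > 0`
by monotonicity. -/
noncomputable def upLocalEnt [MetricSpace X] [MeasurableSpace X] (φ : ℝ → X → X) (μ : Measure X) (x : X) :
    ℝ≥0∞ :=
  ⨆ (ε : ℝ) (_ : 0 < ε), upLocalEntAt φ μ x ε

/-- The upper local entropy `h̄_μ(φ) = ∫ h̄_μ(φ,x) dμ(x)`. -/
noncomputable def upEnt [MetricSpace X] [MeasurableSpace X] (φ : ℝ → X → X) (μ : Measure X) : ℝ≥0∞ :=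
  ∫⁻ x, upLocalEnt φ μ x ∂μ

/-- `ℳ^s_{N,ε}(φ,Z)` for Bowen entropy. -/
noncomputable def bowenPre [MetricSpace X] (φ : ℝ → X → X) (Z : Set X) (s ε : ℝ) (N : ℕ) :
    ℝ≥0∞ :=
  ⨅ (x : ℕ → X) (t : ℕ → ℝ)
    (_ : (∀ i, (N : ℝ) ≤ t i) ∧ Z ⊆ ⋃ i, repBall φ (x i) (t i) ε),
    ∑' i, ENNReal.ofReal (Real.exp (-(s * t i)))

/-- `ℳ^s_ε(φ,Z) = lim_{N→∞} ℳ^s_{N,ε}(φ,Z)` (a non-decreasing limit). -/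
noncomputable def bowenMeps [MetricSpace X] (φ : ℝ → X → X) (Z : Set X) (s ε : ℝ) : ℝ≥0∞ :=
  ⨆ N : ℕ, bowenPre φ Z s ε N

/-- `ℳ^s(φ,Z) = lim_{ε→0} ℳ^s_ε(φ,Z)` (a non-decreasing limit as `ε` decreases). -/
noncomputable def bowenM [MetricSpace X] (φ : ℝ → X → X) (Z : Set X) (s : ℝ) : ℝ≥0∞ :=
  ⨆ (ε : ℝ) (_ : 0 < ε), bowenMeps φ Z s ε

/-- The Bowen topological entropy `h^B_top(φ,Z)`. -/
noncomputable def bowenEnt [MetricSpace X] (φ : ℝ → X → X) (Z : Set X) : ℝ≥0∞ :=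
  sInf (ENNReal.ofReal '' {s : ℝ | 0 ≤ s ∧ bowenM φ Z s = 0})


section Aux
open scoped Classical
variable {X : Type*} [MetricSpace X]

noncomputable def descSet (K : ℕ → Finset X) (γ : ℕ → ℝ) (i : ℕ) (x : X) : ℕ → Finset X
  | 0 => {x}
  | j + 1 => (K (i + j + 1)).filter
      (fun z => ∃ y ∈ descSet K γ i x j, z ∈ Metric.ball y (γ (i + j)))

variable {K : ℕ → Finset X} {γ : ℕ → ℝ} {i : ℕ} {x : X}

lemma mem_descSet_succ {z : X} {j : ℕ} :
    z ∈ descSet K γ i x (j+1) ↔ z ∈ K (i + j + 1) ∧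
      ∃ y ∈ descSet K γ i x j, z ∈ Metric.ball y (γ (i + j)) := by
  simp [descSet, Finset.mem_filter]

lemma descSet_subset (hx : x ∈ K i) : ∀ j, descSet K γ i x j ⊆ K (i + j)
  | 0 => by
      intro z hz
      simp only [descSet, Finset.mem_singleton] at hz
      simpa [hz] using hx
  | j + 1 => Finset.filter_subset _ _

variable (hγpos : ∀ i, 0 < γ i) (hγ : ∀ i, γ (i + 1) < γ i / 4)
  (hdisj : ∀ i, ∀ x ∈ K i, ∀ y ∈ K i, x ≠ y →
      Disjoint (Metric.closedBall x (γ i)) (Metric.closedBall y (γ i)))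
  (hnest : ∀ i, ∀ y ∈ K (i + 1), ∃ x ∈ K i,
      Metric.closedBall y (γ (i + 1)) ⊆ Metric.closedBall x (γ i / 2))

include hγpos hγ hdisj hnest

lemma descSet_dist (hx : x ∈ K i) :
    ∀ j, ∀ y ∈ descSet K γ i x j, dist y x ≤ 2/3 * (γ i - γ (i + j))
  | 0 => by
      intro y hy
      simp only [descSet, Finset.mem_singleton] at hy
      simp [hy]
  | j + 1 => by
      intro y hy
      rw [mem_descSet_succ] at hy
      obtain ⟨hyK, p, hp, hyp⟩ := hy
      obtain ⟨q, hq, hsub⟩ := hnest (i + j) y hyK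
      have hyq : dist y q ≤ γ (i + j) / 2 := by
        have := hsub (Metric.mem_closedBall_self (le_of_lt (hγpos _)))
        simpa [Metric.mem_closedBall] using this
      have hpK : p ∈ K (i + j) := descSet_subset hx j hp
      have hqp : q = p := by
        by_contra h
        have h1 : y ∈ Metric.closedBall q (γ (i + j)) :=
          Metric.mem_closedBall.mpr (hyq.trans (by linarith [hγpos (i + j)]))
        have h2 : y ∈ Metric.closedBall p (γ (i + j)) :=
          Metric.mem_closedBall.mpr (le_of_lt (Metric.mem_ball.mp hyp))
        exact Set.disjoint_left.mp (hdisj (i + j) q hq p hpK h) h1 h2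
      have hprev := descSet_dist hx j p hp
      have hγ' := hγ (i + j)
      have h4 : γ (i + (j + 1)) < γ (i + j) / 4 := by
        have : i + (j + 1) = (i + j) + 1 := by ring
        rw [this]; exact hγ'
      calc dist y x ≤ dist y p + dist p x := dist_triangle _ _ _
        _ ≤ γ (i + j) / 2 + 2/3 * (γ i - γ (i + j)) := by
            have : dist y p ≤ γ (i + j) / 2 := hqp ▸ hyq
            linarith
        _ ≤ 2/3 * (γ i - γ (i + (j + 1))) := by linarith

lemma descSet_dist' (hx : x ∈ K i) {j : ℕ} {y : X} (hy : y ∈ descSet K γ i x j) :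
    dist y x ≤ 2/3 * γ i := by
  have := descSet_dist hγpos hγ hdisj hnest hx j y hy
  have := hγpos (i + j)
  linarith

lemma descSet_cover : ∀ j, ∀ z ∈ K (i + j), ∃ x ∈ K i, z ∈ descSet K γ i x j
  | 0 => fun z hz => ⟨z, hz, by simp [descSet]⟩
  | j + 1 => by
      intro z hz
      obtain ⟨q, hq, hsub⟩ := hnest (i + j) z hz
      have hzq : dist z q ≤ γ (i + j) / 2 := by
        have := hsub (Metric.mem_closedBall_self (le_of_lt (hγpos _)))
        simpa [Metric.mem_closedBall] using this
      obtain ⟨x, hx, hqdesc⟩ := descSet_cover j q hq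
      exact ⟨x, hx, mem_descSet_succ.mpr ⟨hz, q, hqdesc,
        Metric.mem_ball.mpr (lt_of_le_of_lt hzq (by linarith [hγpos (i + j)]))⟩⟩

lemma descSet_unique {x' : X} (hx : x ∈ K i) (hx' : x' ∈ K i) (hne : x ≠ x') {j : ℕ} {z : X}
    (hz : z ∈ descSet K γ i x j) : z ∉ descSet K γ i x' j := by
  intro hz'
  have h1 : z ∈ Metric.closedBall x (γ i) :=
    Metric.mem_closedBall.mpr ((descSet_dist' hγpos hγ hdisj hnest hx hz).trans
      (by linarith [hγpos i]))
  have h2 : z ∈ Metric.closedBall x' (γ i) :=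
    Metric.mem_closedBall.mpr ((descSet_dist' hγpos hγ hdisj hnest hx' hz').trans
      (by linarith [hγpos i]))
  exact Set.disjoint_left.mp (hdisj i x hx x' hx' hne) h1 h2
end Aux

section Mass
open scoped Classical
set_option linter.unusedSectionVars false
variable {X : Type*} [MetricSpace X] {K : ℕ → Finset X} {γ : ℕ → ℝ} {m : ℕ → X → ℝ} {s : ℝ}
  {i : ℕ} {x : X}
variable (hγpos : ∀ i, 0 < γ i) (hγ : ∀ i, γ (i + 1) < γ i / 4)
  (hdisj : ∀ i, ∀ x ∈ K i, ∀ y ∈ K i, x ≠ y →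
      Disjoint (Metric.closedBall x (γ i)) (Metric.closedBall y (γ i)))
  (hnest : ∀ i, ∀ y ∈ K (i + 1), ∃ x ∈ K i,
      Metric.closedBall y (γ (i + 1)) ⊆ Metric.closedBall x (γ i / 2))
  (h1 : ∀ l, ∀ y ∈ K l, Real.exp (-(m l y * s)) ≤
      ∑ z ∈ (K (l + 1)).filter (fun z => z ∈ Metric.ball y (γ l)),
        Real.exp (-(m (l + 1) z * s)))
  (h2 : ∀ l, ∀ y ∈ K l,
      (∑ z ∈ (K (l + 1)).filter (fun z => z ∈ Metric.ball y (γ l)),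
        Real.exp (-(m (l + 1) z * s))) ≤
      (1 + (2 : ℝ)⁻¹ ^ (l + 1)) * Real.exp (-(m l y * s)))

include hγpos hγ hdisj hnest h1 h2

lemma descSet_biUnion (hx : x ∈ K i) (j : ℕ) :
    descSet K γ i x (j + 1) = (descSet K γ i x j).biUnion
      (fun y => (K (i + j + 1)).filter (fun z => z ∈ Metric.ball y (γ (i + j)))) := by
  ext z
  simp only [mem_descSet_succ, Finset.mem_biUnion, Finset.mem_filter]
  tauto

lemma descSet_pairwiseDisjoint (hx : x ∈ K i) (j : ℕ) :
    (↑(descSet K γ i x j) : Set X).PairwiseDisjoint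
      (fun y => (K (i + j + 1)).filter (fun z => z ∈ Metric.ball y (γ (i + j)))) := by
  intro y hy y' hy' hne
  simp only [Finset.coe_mem, Finset.mem_coe] at hy hy'
  refine Finset.disjoint_left.mpr ?_
  intro z hz hz'
  simp only [Finset.mem_filter] at hz hz'
  have hyK : y ∈ K (i + j) := descSet_subset hx j hy
  have hy'K : y' ∈ K (i + j) := descSet_subset hx j hy'
  have m1 : z ∈ Metric.closedBall y (γ (i + j)) := Metric.ball_subset_closedBall hz.2
  have m2 : z ∈ Metric.closedBall y' (γ (i + j)) := Metric.ball_subset_closedBall hz'.2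
  exact Set.disjoint_left.mp (hdisj (i + j) y hyK y' hy'K hne) m1 m2

lemma descSet_sum_bounds (hx : x ∈ K i) : ∀ j : ℕ,
    Real.exp (-(m i x * s)) ≤ (∑ y ∈ descSet K γ i x j, Real.exp (-(m (i + j) y * s))) ∧
    (∑ y ∈ descSet K γ i x j, Real.exp (-(m (i + j) y * s))) ≤
      (∏ n ∈ Finset.range j, (1 + (2 : ℝ)⁻¹ ^ (i + n + 1))) * Real.exp (-(m i x * s))
  | 0 => by simp [descSet]
  | j + 1 => by
      have IH := descSet_sum_bounds hx j
      have hsplit : (∑ y ∈ descSet K γ i x (j + 1), Real.exp (-(m (i + (j + 1)) y * s))) =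
          ∑ y ∈ descSet K γ i x j,
            ∑ z ∈ (K (i + j + 1)).filter (fun z => z ∈ Metric.ball y (γ (i + j))),
              Real.exp (-(m (i + j + 1) z * s)) := by
        rw [descSet_biUnion hγpos hγ hdisj hnest h1 h2 hx j,
          Finset.sum_biUnion (descSet_pairwiseDisjoint hγpos hγ hdisj hnest h1 h2 hx j)]
        norm_num [show i + (j + 1) = i + j + 1 from rfl]
      constructor
      · refine IH.1.trans ?_
        rw [hsplit]
        refine Finset.sum_le_sum fun y hy => ?_
        exact h1 (i + j) y (descSet_subset hx j hy)
      · rw [hsplit, Finset.prod_range_succ]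
        have step : (∑ y ∈ descSet K γ i x j,
            ∑ z ∈ (K (i + j + 1)).filter (fun z => z ∈ Metric.ball y (γ (i + j))),
              Real.exp (-(m (i + j + 1) z * s))) ≤
            (1 + (2 : ℝ)⁻¹ ^ (i + j + 1)) *
              ∑ y ∈ descSet K γ i x j, Real.exp (-(m (i + j) y * s)) := by
          rw [Finset.mul_sum]
          refine Finset.sum_le_sum fun y hy => ?_
          exact h2 (i + j) y (descSet_subset hx j hy)
        refine step.trans ?_
        have hc : (0 : ℝ) ≤ 1 + (2 : ℝ)⁻¹ ^ (i + j + 1) := by positivity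
        calc (1 + (2 : ℝ)⁻¹ ^ (i + j + 1)) *
              ∑ y ∈ descSet K γ i x j, Real.exp (-(m (i + j) y * s))
            ≤ (1 + (2 : ℝ)⁻¹ ^ (i + j + 1)) *
              ((∏ n ∈ Finset.range j, (1 + (2 : ℝ)⁻¹ ^ (i + n + 1))) *
                Real.exp (-(m i x * s))) := by
              exact mul_le_mul_of_nonneg_left IH.2 hc
          _ = (∏ n ∈ Finset.range j, (1 + (2 : ℝ)⁻¹ ^ (i + n + 1))) *
                (1 + (2 : ℝ)⁻¹ ^ (i + j + 1)) * Real.exp (-(m i x * s)) := by ring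
end Mass

lemma multipliable_aux : Multipliable (fun n : ℕ => (1 + (2 : ℝ)⁻¹ ^ (n + 1))) := by
  have hpos : ∀ n : ℕ, (0 : ℝ) < 1 + (2 : ℝ)⁻¹ ^ (n + 1) := fun n => by positivity
  have hsum : Summable (fun n : ℕ => Real.log (1 + (2 : ℝ)⁻¹ ^ (n + 1))) := by
    have hgeo : Summable (fun n : ℕ => (2 : ℝ)⁻¹ ^ (n + 1)) := by
      have := (summable_geometric_of_lt_one (by norm_num : (0:ℝ) ≤ 2⁻¹)
        (by norm_num : (2:ℝ)⁻¹ < 1)).mul_right (2:ℝ)⁻¹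
      refine this.congr fun n => ?_
      rw [pow_succ]
    refine Summable.of_nonneg_of_le (fun n => Real.log_nonneg (by nlinarith [pow_nonneg (by norm_num : (0:ℝ) ≤ 2⁻¹) (n + 1)])) (fun n => ?_) hgeo
    have := Real.log_le_sub_one_of_pos (hpos n)
    linarith
  have h := hsum.hasSum.rexp
  have heq : (Real.exp ∘ fun n : ℕ => Real.log (1 + (2 : ℝ)⁻¹ ^ (n + 1))) =
      fun n : ℕ => 1 + (2 : ℝ)⁻¹ ^ (n + 1) := funext fun n => Real.exp_log (hpos n)
  rw [heq] at h
  exact ⟨_, h⟩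

lemma one_le_fac_aux (k : ℕ) : (1 : ℝ) ≤ 1 + (2 : ℝ)⁻¹ ^ (k + 1) :=
  le_add_of_nonneg_right (by positivity)

lemma one_le_prod_fac_aux (t : Finset ℕ) :
    (1 : ℝ) ≤ ∏ n ∈ t, (1 + (2 : ℝ)⁻¹ ^ (n + 1)) := by
  have h := Finset.prod_le_prod (f := fun _ : ℕ => (1 : ℝ))
    (g := fun n : ℕ => 1 + (2 : ℝ)⁻¹ ^ (n + 1)) (s := t)
    (fun _ _ => zero_le_one) (fun n _ => one_le_fac_aux n)
  simpa using h

lemma prod_range_fac_le_tprod_aux (N : ℕ) :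
    (∏ n ∈ Finset.range N, (1 + (2 : ℝ)⁻¹ ^ (n + 1))) ≤
      ∏' n : ℕ, (1 + (2 : ℝ)⁻¹ ^ (n + 1)) := by
  refine ge_of_tendsto multipliable_aux.hasProd.tendsto_prod_nat ?_
  rw [Filter.eventually_atTop]
  refine ⟨N, fun n hn => ?_⟩
  rw [← Finset.prod_range_mul_prod_Ico _ hn]
  refine le_mul_of_one_le_right ?_ ?_
  · exact Finset.prod_nonneg fun k _ => by positivity
  · exact one_le_prod_fac_aux _

lemma one_le_tprod_aux : 1 ≤ ∏' n : ℕ, (1 + (2 : ℝ)⁻¹ ^ (n + 1)) := by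
  have h := prod_range_fac_le_tprod_aux 0
  simpa using h

lemma prod_range_le_tprod_aux (i j : ℕ) :
    (∏ n ∈ Finset.range j, (1 + (2 : ℝ)⁻¹ ^ (i + n + 1))) ≤
      ∏' n : ℕ, (1 + (2 : ℝ)⁻¹ ^ (n + 1)) := by
  refine le_trans ?_ (prod_range_fac_le_tprod_aux (i + j))
  rw [← Finset.prod_range_mul_prod_Ico _ (Nat.le_add_right i j),
    Finset.prod_Ico_eq_prod_range]
  simp only [Nat.add_sub_cancel_left]
  refine le_mul_of_one_le_left ?_ (one_le_prod_fac_aux _)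
  exact Finset.prod_nonneg fun k _ => by positivity

section Integral
variable {X : Type*} [MetricSpace X] [CompactSpace X] [MeasurableSpace X] [BorelSpace X]

lemma integral_finset_dirac (F : Finset X) (c : X → ℝ) (hc : ∀ y ∈ F, 0 ≤ c y)
    {g : X → ℝ} (hg : Continuous g) :
    ∫ y, g y ∂(∑ x ∈ F, (ENNReal.ofReal (c x)) • Measure.dirac x) = ∑ x ∈ F, c x * g x := by
  have hint : ∀ x ∈ F, Integrable g ((ENNReal.ofReal (c x)) • Measure.dirac x) := by
    intro x _
    have h1 : Integrable g (Measure.dirac x) :=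
      (hg.integrable_of_hasCompactSupport (HasCompactSupport.of_compactSpace g))
    exact h1.smul_measure ENNReal.ofReal_ne_top
  rw [integral_finset_sum_measure hint]
  refine Finset.sum_congr rfl fun x hx => ?_
  rw [integral_smul_measure, integral_dirac, ENNReal.toReal_ofReal (hc x hx), smul_eq_mul]

lemma measure_le_integral_le (μ : Measure X) [IsFiniteMeasure μ] {A U : Set X}
    (hA : MeasurableSet A) (hU : MeasurableSet U) {g : X → ℝ} (hg : Continuous g)
    (hg0 : ∀ x, 0 ≤ g x) (hg1 : ∀ x, g x ≤ 1) (hgA : ∀ x ∈ A, g x = 1)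
    (hgU : ∀ x ∉ U, g x = 0) :
    (μ A).toReal ≤ ∫ x, g x ∂μ ∧ ∫ x, g x ∂μ ≤ (μ U).toReal := by
  have hgint : Integrable g μ :=
    hg.integrable_of_hasCompactSupport (HasCompactSupport.of_compactSpace g)
  have hAU : A ⊆ U := fun x hx => by
    by_contra h
    have := hgU x h
    rw [hgA x hx] at this
    norm_num at this
  have hAm : μ A ≤ μ U := measure_mono hAU
  constructor
  · have hind : Integrable (A.indicator (fun _ => (1 : ℝ))) μ :=
      (integrable_const (1 : ℝ)).indicator hA
    have heq : ∫ x, A.indicator (fun _ => (1 : ℝ)) x ∂μ = (μ A).toReal := by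
      rw [integral_indicator_const (1 : ℝ) hA]; simp; rfl
    rw [← heq]
    refine integral_mono hind hgint fun x => ?_
    by_cases hx : x ∈ A
    · simp [Set.indicator_of_mem hx, hgA x hx]
    · simp [Set.indicator_of_notMem hx, hg0 x]
  · have hind : Integrable (U.indicator (fun _ => (1 : ℝ))) μ :=
      (integrable_const (1 : ℝ)).indicator hU
    have heq : ∫ x, U.indicator (fun _ => (1 : ℝ)) x ∂μ = (μ U).toReal := by
      rw [integral_indicator_const (1 : ℝ) hU]; simp; rfl
    rw [← heq]
    refine integral_mono hgint hind fun x => ?_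
    by_cases hx : x ∈ U
    · simp [Set.indicator_of_mem hx, hg1 x]
    · simp [Set.indicator_of_notMem hx, hgU x hx]
end Integral

open scoped Classical in
/-- the weak-* limit measure of the inductive construction satisfies
`e^{-m_i(x)s} ≤ μ̃(B̄(x,γ_i)) ≤ C e^{-m_i(x)s}` and `1 < μ̃(K̃) ≤ 2C`. -/
theorem limit_measure_estimates [MetricSpace X] [CompactSpace X]
    [MeasurableSpace X] [BorelSpace X]
    (φ : ℝ → X → X) (hφ : IsFlow φ) (hfpf : FixedPointFree φ) (s : ℝ) (hs : 0 < s)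
    (K : ℕ → Finset X) (m : ℕ → X → ℝ) (γ : ℕ → ℝ) (μseq : ℕ → Measure X)
    (hμseq : ∀ i, μseq i =
      ∑ x ∈ K i, (ENNReal.ofReal (Real.exp (-(m i x * s)))) • Measure.dirac x)
    (hγpos : ∀ i, 0 < γ i) (hγ : ∀ i, γ (i + 1) < γ i / 4)
    (hdisj : ∀ i, ∀ x ∈ K i, ∀ y ∈ K i, x ≠ y →
      Disjoint (Metric.closedBall x (γ i)) (Metric.closedBall y (γ i)))
    (hnest : ∀ i, ∀ y ∈ K (i + 1), ∃ x ∈ K i,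
      Metric.closedBall y (γ (i + 1)) ⊆ Metric.closedBall x (γ i / 2))
    (hmass₁ : ∀ i, ∀ x ∈ K i,
      ENNReal.ofReal (Real.exp (-(m i x * s))) ≤
        ∑ y ∈ (K (i + 1)).filter (fun y => y ∈ Metric.ball x (γ i)),
          ENNReal.ofReal (Real.exp (-(m (i + 1) y * s))))
    (hmass₂ : ∀ i, ∀ x ∈ K i,
      (∑ y ∈ (K (i + 1)).filter (fun y => y ∈ Metric.ball x (γ i)),
          ENNReal.ofReal (Real.exp (-(m (i + 1) y * s)))) ≤
        ENNReal.ofReal (1 + (2 : ℝ)⁻¹ ^ (i + 1)) *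
          ENNReal.ofReal (Real.exp (-(m i x * s))))
    (hsum₁ : 1 < ∑ x ∈ K 1, Real.exp (-(m 1 x * s)))
    (hsum₂ : ∑ x ∈ K 1, Real.exp (-(m 1 x * s)) < 2)
    (μt : Measure X) [IsFiniteMeasure μt]
    (hweak : ∃ f : ℕ → ℕ, StrictMono f ∧ ∀ g : C(X, ℝ),
      Filter.Tendsto (fun n => ∫ x, g x ∂(μseq (f n))) Filter.atTop
        (𝓝 (∫ x, g x ∂μt))) :
    (∀ i, ∀ x ∈ K i,
      ENNReal.ofReal (Real.exp (-(m i x * s))) ≤ μt (Metric.closedBall x (γ i)) ∧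
      μt (Metric.closedBall x (γ i)) ≤
        ENNReal.ofReal (∏' n : ℕ, (1 + (2 : ℝ)⁻¹ ^ (n + 1))) *
          ENNReal.ofReal (Real.exp (-(m i x * s)))) ∧
    1 < μt (⋂ n, closure (⋃ i ∈ Set.Ici n, (K i : Set X))) ∧
    μt (⋂ n, closure (⋃ i ∈ Set.Ici n, (K i : Set X))) ≤
      2 * ENNReal.ofReal (∏' n : ℕ, (1 + (2 : ℝ)⁻¹ ^ (n + 1))) := by 
  classical
  obtain ⟨f, hfmono, hflim⟩ := hweak
  have hfle : ∀ n, n ≤ f n := fun n => hfmono.le_apply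
  set C : ℝ := ∏' n : ℕ, (1 + (2 : ℝ)⁻¹ ^ (n + 1)) with hCdef
  have hC1 : (1 : ℝ) ≤ C := one_le_tprod_aux
  have hC0 : (0 : ℝ) ≤ C := zero_le_one.trans hC1
  -- real versions of the mass hypotheses
  have h1 : ∀ l, ∀ y ∈ K l, Real.exp (-(m l y * s)) ≤
      ∑ z ∈ (K (l + 1)).filter (fun z => z ∈ Metric.ball y (γ l)),
        Real.exp (-(m (l + 1) z * s)) := by
    intro l y hy
    have h := hmass₁ l y hy
    rw [← ENNReal.ofReal_sum_of_nonneg (fun z _ => Real.exp_nonneg _)] at h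
    exact (ENNReal.ofReal_le_ofReal_iff
      (Finset.sum_nonneg fun z _ => Real.exp_nonneg _)).mp h
  have h2 : ∀ l, ∀ y ∈ K l,
      (∑ z ∈ (K (l + 1)).filter (fun z => z ∈ Metric.ball y (γ l)),
        Real.exp (-(m (l + 1) z * s))) ≤
      (1 + (2 : ℝ)⁻¹ ^ (l + 1)) * Real.exp (-(m l y * s)) := by
    intro l y hy
    have h := hmass₂ l y hy
    rw [← ENNReal.ofReal_sum_of_nonneg (fun z _ => Real.exp_nonneg _),
      ← ENNReal.ofReal_mul (by positivity)] at h
    exact (ENNReal.ofReal_le_ofReal_iff (by positivity)).mp h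
  -- integrals against μseq
  have hint : ∀ (j : ℕ) (g : X → ℝ), Continuous g →
      ∫ x, g x ∂(μseq j) = ∑ y ∈ K j, Real.exp (-(m j y * s)) * g y := by
    intro j g hg
    rw [hμseq j]
    exact integral_finset_dirac _ _ (fun y _ => Real.exp_nonneg _) hg
  have hg01aux : ∀ (g : C(X, ℝ)), (∀ z, g z ∈ Set.Icc (0:ℝ) 1) →
      (∀ z, 0 ≤ g z) ∧ (∀ z, g z ≤ 1) := fun g h => ⟨fun z => (h z).1, fun z => (h z).2⟩
  -- PART 1
  have part1 : ∀ i, ∀ x ∈ K i,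
      ENNReal.ofReal (Real.exp (-(m i x * s))) ≤ μt (Metric.closedBall x (γ i)) ∧
      μt (Metric.closedBall x (γ i)) ≤
        ENNReal.ofReal C * ENNReal.ofReal (Real.exp (-(m i x * s))) := by
    intro i x hx
    constructor
    · -- lower bound
      have hdj : Disjoint ((Metric.ball x (γ i))ᶜ) (Metric.closedBall x (2/3 * γ i)) := by
        rw [Set.disjoint_left]
        intro z hz hz'
        exact hz (Metric.mem_ball.mpr (lt_of_le_of_lt (Metric.mem_closedBall.mp hz')
          (by linarith [hγpos i])))
      obtain ⟨g, hg0, hg1, hg01⟩ := exists_continuous_zero_one_of_isClosed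
        (Metric.isOpen_ball.isClosed_compl) Metric.isClosed_closedBall hdj
      obtain ⟨hgn, hgb⟩ := hg01aux g hg01
      have hbound : ∀ j : ℕ, Real.exp (-(m i x * s)) ≤ ∫ y, g y ∂(μseq (i + j)) := by
        intro j
        rw [hint (i + j) g g.continuous]
        have step1 : Real.exp (-(m i x * s)) ≤
            ∑ y ∈ descSet K γ i x j, Real.exp (-(m (i + j) y * s)) * g y := by
          have heq : ∀ y ∈ descSet K γ i x j,
              Real.exp (-(m (i + j) y * s)) * g y = Real.exp (-(m (i + j) y * s)) := by
            intro y hy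
            have : y ∈ Metric.closedBall x (2/3 * γ i) :=
              Metric.mem_closedBall.mpr (descSet_dist' hγpos hγ hdisj hnest hx hy)
            rw [hg1 this, Pi.one_apply, mul_one]
          rw [Finset.sum_congr rfl heq]
          exact (descSet_sum_bounds hγpos hγ hdisj hnest h1 h2 hx j).1
        refine step1.trans (Finset.sum_le_sum_of_subset_of_nonneg (descSet_subset hx j)
          fun y _ _ => mul_nonneg (Real.exp_nonneg _) (hgn y))
      have hev : ∀ᶠ n in Filter.atTop,
          Real.exp (-(m i x * s)) ≤ ∫ y, g y ∂(μseq (f n)) := by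
        rw [Filter.eventually_atTop]
        refine ⟨i, fun n hn => ?_⟩
        obtain ⟨j, hj⟩ : ∃ j, f n = i + j :=
          ⟨f n - i, (Nat.add_sub_cancel' (hn.trans (hfle n))).symm⟩
        rw [hj]; exact hbound j
      have hlim := ge_of_tendsto (hflim g) hev
      have hhelp := measure_le_integral_le μt (A := (∅ : Set X))
        MeasurableSet.empty Metric.isOpen_ball.measurableSet g.continuous hgn hgb
        (fun z hz => absurd hz (Set.notMem_empty z))
        (fun z hz => hg0 hz)
      have := hlim.trans (hhelp.2.trans (ENNReal.toReal_mono (measure_ne_top μt _)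
        (measure_mono Metric.ball_subset_closedBall)))
      exact (ENNReal.ofReal_le_iff_le_toReal (measure_ne_top μt _)).mpr this
    · -- upper bound
      set D : Set X := ⋃ x' ∈ ((K i).erase x), Metric.closedBall x' (2/3 * γ i) with hD
      have hDclosed : IsClosed D :=
        Set.Finite.isClosed_biUnion ((K i).erase x).finite_toSet
          (fun _ _ => Metric.isClosed_closedBall)
      have hDdisj : Disjoint D (Metric.closedBall x (γ i)) := by
        rw [Set.disjoint_left]
        intro z hz hz'
        simp only [hD, Set.mem_iUnion] at hz
        obtain ⟨x', hx', hzx'⟩ := hz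
        have hmem : z ∈ Metric.closedBall x' (γ i) :=
          Metric.closedBall_subset_closedBall (by linarith [hγpos i]) hzx'
        exact Set.disjoint_left.mp
          (hdisj i x' (Finset.mem_of_mem_erase hx') x hx (Finset.ne_of_mem_erase hx'))
          hmem hz'
      obtain ⟨g, hg0, hg1, hg01⟩ := exists_continuous_zero_one_of_isClosed
        hDclosed Metric.isClosed_closedBall hDdisj
      obtain ⟨hgn, hgb⟩ := hg01aux g hg01
      have hbound : ∀ j : ℕ, ∫ y, g y ∂(μseq (i + j)) ≤ C * Real.exp (-(m i x * s)) := by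
        intro j
        rw [hint (i + j) g g.continuous]
        have hzero : ∀ y ∈ K (i + j) \ descSet K γ i x j,
            Real.exp (-(m (i + j) y * s)) * g y = 0 := by
          intro y hy
          rw [Finset.mem_sdiff] at hy
          obtain ⟨x', hx', hydesc⟩ := descSet_cover hγpos hγ hdisj hnest j y hy.1
          have hxne : x' ≠ x := by
            rintro rfl; exact hy.2 hydesc
          have hyD : y ∈ D := by
            simp only [hD, Set.mem_iUnion]
            exact ⟨x', Finset.mem_erase.mpr ⟨hxne, hx'⟩,
              Metric.mem_closedBall.mpr (descSet_dist' hγpos hγ hdisj hnest hx' hydesc)⟩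
          rw [hg0 hyD, Pi.zero_apply, mul_zero]
        have hsplit := Finset.sum_sdiff (f := fun y => Real.exp (-(m (i + j) y * s)) * g y)
          (descSet_subset (γ := γ) hx j)
        rw [← hsplit, Finset.sum_eq_zero hzero, zero_add]
        have hle1 : (∑ y ∈ descSet K γ i x j, Real.exp (-(m (i + j) y * s)) * g y) ≤
            ∑ y ∈ descSet K γ i x j, Real.exp (-(m (i + j) y * s)) :=
          Finset.sum_le_sum fun y _ =>
            mul_le_of_le_one_right (Real.exp_nonneg _) (hgb y)
        refine hle1.trans ((descSet_sum_bounds hγpos hγ hdisj hnest h1 h2 hx j).2.trans ?_)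
        exact mul_le_mul_of_nonneg_right (prod_range_le_tprod_aux i j) (Real.exp_nonneg _)
      have hev : ∀ᶠ n in Filter.atTop,
          ∫ y, g y ∂(μseq (f n)) ≤ C * Real.exp (-(m i x * s)) := by
        rw [Filter.eventually_atTop]
        refine ⟨i, fun n hn => ?_⟩
        obtain ⟨j, hj⟩ : ∃ j, f n = i + j :=
          ⟨f n - i, (Nat.add_sub_cancel' (hn.trans (hfle n))).symm⟩
        rw [hj]; exact hbound j
      have hlim := le_of_tendsto (hflim g) hev
      have hhelp := measure_le_integral_le μt (A := Metric.closedBall x (γ i))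
        Metric.isClosed_closedBall.measurableSet MeasurableSet.univ g.continuous hgn hgb
        (fun z hz => hg1 hz) (fun z hz => absurd (Set.mem_univ z) hz)
      rw [← ENNReal.ofReal_mul hC0]
      rw [ENNReal.le_ofReal_iff_toReal_le (measure_ne_top μt _) (by positivity)]
      exact hhelp.1.trans hlim
  -- PART 2
  set T1 : ℝ := ∑ x ∈ K 1, Real.exp (-(m 1 x * s)) with hT1
  have hT1pos : (0 : ℝ) < T1 := lt_trans one_pos hsum₁
  have hpart : ∀ j, K (1 + j) = (K 1).biUnion (fun x => descSet K γ 1 x j) := by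
    intro j
    ext z
    simp only [Finset.mem_biUnion]
    constructor
    · exact fun hz => descSet_cover hγpos hγ hdisj hnest j z hz
    · rintro ⟨x, hx, hz⟩; exact descSet_subset hx j hz
  have hpd : ∀ j, (↑(K 1) : Set X).PairwiseDisjoint (fun x => descSet K γ 1 x j) := by
    intro j x hx x' hx' hne
    refine Finset.disjoint_left.mpr fun z hz hz' => ?_
    exact descSet_unique hγpos hγ hdisj hnest (Finset.mem_coe.mp hx) (Finset.mem_coe.mp hx')
      hne hz hz'
  have hT : ∀ l, 1 ≤ l →
      T1 ≤ (∑ y ∈ K l, Real.exp (-(m l y * s))) ∧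
      (∑ y ∈ K l, Real.exp (-(m l y * s))) ≤ C * T1 := by
    intro l hl
    obtain ⟨j, rfl⟩ : ∃ j, l = 1 + j := ⟨l - 1, by omega⟩
    rw [hpart j, Finset.sum_biUnion (hpd j)]
    constructor
    · exact Finset.sum_le_sum fun x hx =>
        (descSet_sum_bounds hγpos hγ hdisj hnest h1 h2 hx j).1
    · rw [hT1, Finset.mul_sum]
      exact Finset.sum_le_sum fun x hx =>
        ((descSet_sum_bounds hγpos hγ hdisj hnest h1 h2 hx j).2.trans
          (mul_le_mul_of_nonneg_right (prod_range_le_tprod_aux 1 j) (Real.exp_nonneg _)))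
  set F : ℕ → Set X := fun n => closure (⋃ i ∈ Set.Ici n, (K i : Set X)) with hF
  have hFclosed : ∀ n, IsClosed (F n) := fun n => isClosed_closure
  have hFanti : Antitone F := by
    intro a b hab
    refine closure_mono (Set.iUnion₂_subset fun i hi => ?_)
    exact Set.subset_biUnion_of_mem (u := fun i => ((K i : Set X)))
      (show i ∈ Set.Ici a from hab.trans hi)
  have hKF : ∀ n j, n ≤ j → (↑(K j) : Set X) ⊆ F n := fun n j hnj z hz =>
    subset_closure (Set.mem_biUnion hnj hz)
  have hFlow : ∀ n, ENNReal.ofReal T1 ≤ μt (F n) := by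
    intro n
    rw [Set.measure_eq_iInf_isOpen]
    refine le_iInf fun U => le_iInf fun hFU => le_iInf fun hUopen => ?_
    have hdj : Disjoint (Uᶜ) (F n) := by
      rw [Set.disjoint_left]
      exact fun z hz hz' => hz (hFU hz')
    obtain ⟨g, hg0, hg1, hg01⟩ := exists_continuous_zero_one_of_isClosed
      hUopen.isClosed_compl (hFclosed n) hdj
    obtain ⟨hgn, hgb⟩ := hg01aux g hg01
    have hb : ∀ j, n ≤ j → 1 ≤ j → T1 ≤ ∫ y, g y ∂(μseq j) := by
      intro j hnj h1j
      rw [hint j g g.continuous]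
      have heq : ∀ y ∈ K j, Real.exp (-(m j y * s)) * g y = Real.exp (-(m j y * s)) := by
        intro y hy
        rw [hg1 (hKF n j hnj (Finset.mem_coe.mpr hy)), Pi.one_apply, mul_one]
      rw [Finset.sum_congr rfl heq]
      exact (hT j h1j).1
    have hev : ∀ᶠ n' in Filter.atTop, T1 ≤ ∫ y, g y ∂(μseq (f n')) := by
      rw [Filter.eventually_atTop]
      refine ⟨max n 1, fun n' hn' => ?_⟩
      have h' := hn'.trans (hfle n')
      exact hb (f n') (le_trans (le_max_left n 1) h') (le_trans (le_max_right n 1) h')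
    have hlim := ge_of_tendsto (hflim g) hev
    have hhelp := measure_le_integral_le μt (A := (∅ : Set X))
      MeasurableSet.empty hUopen.measurableSet g.continuous hgn hgb
      (fun z hz => absurd hz (Set.notMem_empty z))
      (fun z hz => hg0 hz)
    rw [ENNReal.ofReal_le_iff_le_toReal (measure_ne_top μt U)]
    exact hlim.trans hhelp.2
  have hKt_ge : ENNReal.ofReal T1 ≤ μt (⋂ n, F n) := by
    rw [Antitone.measure_iInter hFanti
      (fun n => (hFclosed n).measurableSet.nullMeasurableSet) ⟨0, measure_ne_top μt _⟩]
    exact le_iInf hFlow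
  have hlow : 1 < μt (⋂ n, F n) := by
    refine lt_of_lt_of_le ?_ hKt_ge
    rw [← ENNReal.ofReal_one]
    exact (ENNReal.ofReal_lt_ofReal_iff hT1pos).mpr hsum₁
  have huptot : (μt Set.univ).toReal ≤ 2 * C := by
    set g : C(X, ℝ) := ContinuousMap.const X 1 with hg
    have hb : ∀ j, 1 ≤ j → ∫ y, g y ∂(μseq j) ≤ 2 * C := by
      intro j h1j
      rw [hint j g g.continuous]
      simp only [hg, ContinuousMap.const_apply, mul_one]
      have := (hT j h1j).2
      nlinarith [hsum₂, hC0, hC1]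
    have hev : ∀ᶠ n' in Filter.atTop, ∫ y, g y ∂(μseq (f n')) ≤ 2 * C := by
      rw [Filter.eventually_atTop]
      exact ⟨1, fun n' hn' => hb (f n') (hn'.trans (hfle n'))⟩
    have hlim := le_of_tendsto (hflim g) hev
    have : ∫ y, g y ∂μt = (μt Set.univ).toReal := by
      simp [hg, integral_const]; rfl
    rw [← this]
    exact hlim
  have hupper : μt (⋂ n, F n) ≤ 2 * ENNReal.ofReal C := by
    have h0 : μt (⋂ n, F n) ≤ μt Set.univ := measure_mono (Set.subset_univ _)
    have h1' : μt Set.univ ≤ ENNReal.ofReal (2 * C) := by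
      rw [ENNReal.le_ofReal_iff_toReal_le (measure_ne_top _ _) (by positivity)]
      exact huptot
    refine (h0.trans h1').trans (le_of_eq ?_)
    rw [ENNReal.ofReal_mul (by norm_num : (0:ℝ) ≤ 2)]
    norm_num
  exact ⟨part1, hlow, hupper⟩
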